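/- Let p : T ⥤ B be a Waldhausen opfibration with B a Waldhausen category. Then the class of total cofibrations and the class of total weak equivalences in T are each closed under composition. (A morphism f above u is a total cofibration if u is a cofibration in B and f▷ is a cofibration in the fiber over the codomain; similarly for total weak equivalences.) -/

import Mathlib

open CategoryTheory

universe v u v₂ u₂


/-- A Waldhausen structure on a category (requiring only an initial object). -/
structure IsWaldhausen {E : Type u} [Category.{v} E]
    (cof weq : MorphismProperty E) : Prop where
  has_initial : ∃ O : E, Nonempty (Limits.IsInitial O)
  cof_comp : ∀ ⦃X Y Z : E⦄ (f : X ⟶ Y) (g : Y ⟶ Z), cof f → cof g → cof (f ≫ g)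
  weq_comp : ∀ ⦃X Y Z : E⦄ (f : X ⟶ Y) (g : Y ⟶ Z), weq f → weq g → weq (f ≫ g)
  cof_iso : ∀ ⦃X Y : E⦄ (f : X ⟶ Y), IsIso f → cof f
  weq_iso : ∀ ⦃X Y : E⦄ (f : X ⟶ Y), IsIso f → weq f
  cof_initial : ∀ ⦃O X : E⦄, Limits.IsInitial O → ∀ f : O ⟶ X, cof f
  cof_pushout : ∀ ⦃A X Y : E⦄ (f : A ⟶ X) (g : A ⟶ Y), cof f →
    ∃ (P : E) (h : X ⟶ P) (i : Y ⟶ P), IsPushout f g h i ∧ cof i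
  gluing : ∀ ⦃A X Y A' X' Y' P P' : E⦄
    (f : A ⟶ X) (g : A ⟶ Y) (h : X ⟶ P) (i : Y ⟶ P)
    (f' : A' ⟶ X') (g' : A' ⟶ Y') (h' : X' ⟶ P') (i' : Y' ⟶ P')
    (a : A ⟶ A') (x : X ⟶ X') (y : Y ⟶ Y'),
    cof f → cof f' → weq a → weq x → weq y →
    f ≫ x = a ≫ f' → g ≫ y = a ≫ g' →
    ∀ (sq : IsPushout f g h i), IsPushout f' g' h' i' →
    ∀ (w : f ≫ (x ≫ h') = g ≫ (y ≫ i')),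
      weq (sq.desc (x ≫ h') (y ≫ i') w)

section

variable {B : Type u} [Category.{v} B] (F : B ⥤ Cat.{v₂, u₂})
variable (cofB weqB : MorphismProperty B)
variable (fcof fweq : ∀ A : B, MorphismProperty (F.obj A))

/-- Total cofibrations on the Grothendieck construction: a morphism `(u, φ)` is a total
cofibration if `u` is a cofibration in the base and `φ` is a cofibration in the fiber over
the codomain. -/
def totalCof : MorphismProperty (Grothendieck F) :=
  fun _ Y φ => cofB φ.base ∧ fcof Y.base φ.fiber

/-- Total weak equivalences on the Grothendieck construction. -/
def totalWeq : MorphismProperty (Grothendieck F) :=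
  fun _ Y φ => weqB φ.base ∧ fweq Y.base φ.fiber

/-- The functor `F : B ⥤ Cat` underlying a Waldhausen opfibration has exact reindexing
functors: each `F.map u` preserves initial objects, cofibrations, weak equivalences, and
pushout squares along cofibrations. -/
structure ExactReindexing : Prop where
  map_initial : ∀ ⦃A A' : B⦄ (u : A ⟶ A') (O : F.obj A),
    Limits.IsInitial O → Nonempty (Limits.IsInitial ((F.map u).toFunctor.obj O))
  map_cof : ∀ ⦃A A' : B⦄ (u : A ⟶ A') ⦃X Y : F.obj A⦄ (f : X ⟶ Y),
    fcof A f → fcof A' ((F.map u).toFunctor.map f)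
  map_weq : ∀ ⦃A A' : B⦄ (u : A ⟶ A') ⦃X Y : F.obj A⦄ (f : X ⟶ Y),
    fweq A f → fweq A' ((F.map u).toFunctor.map f)
  map_pushout : ∀ ⦃A A' : B⦄ (u : A ⟶ A')
    ⦃W X Y P : F.obj A⦄ (f : W ⟶ X) (g : W ⟶ Y) (h : X ⟶ P) (i : Y ⟶ P),
    fcof A f → IsPushout f g h i →
    IsPushout ((F.map u).toFunctor.map f) ((F.map u).toFunctor.map g) ((F.map u).toFunctor.map h) ((F.map u).toFunctor.map i)

end

/-- for a Waldhausen opfibration (presented as a functor `F : B ⥤ Cat` whose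
fibers carry Waldhausen structures and whose reindexing functors are exact) over a Waldhausen
category `B`, the classes of total cofibrations and of total weak equivalences on the total
category are each closed under composition. -/
theorem total_classes_comp {B : Type u} [Category.{v} B] (F : B ⥤ Cat.{v₂, u₂})
    (cofB weqB : MorphismProperty B)
    (fcof fweq : ∀ A : B, MorphismProperty (F.obj A))
    (hB : IsWaldhausen cofB weqB)
    (hfib : ∀ A : B, IsWaldhausen (fcof A) (fweq A))
    (hex : ExactReindexing F fcof fweq) :
    (∀ ⦃X Y Z : Grothendieck F⦄ (φ : X ⟶ Y) (ψ : Y ⟶ Z),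
      totalCof F cofB fcof φ → totalCof F cofB fcof ψ → totalCof F cofB fcof (φ ≫ ψ)) ∧
    (∀ ⦃X Y Z : Grothendieck F⦄ (φ : X ⟶ Y) (ψ : Y ⟶ Z),
      totalWeq F weqB fweq φ → totalWeq F weqB fweq ψ → totalWeq F weqB fweq (φ ≫ ψ)) := by
  
  constructor
  · intro X Y Z φ ψ hφ hψ
    refine ⟨hB.cof_comp _ _ hφ.1 hψ.1, ?_⟩
    rw [Grothendieck.comp_fiber]
    exact (hfib Z.base).cof_comp _ _ ((hfib Z.base).cof_iso _ inferInstance)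
      ((hfib Z.base).cof_comp _ _ (hex.map_cof ψ.base _ hφ.2) hψ.2)
  · intro X Y Z φ ψ hφ hψ
    refine ⟨hB.weq_comp _ _ hφ.1 hψ.1, ?_⟩
    rw [Grothendieck.comp_fiber]
    exact (hfib Z.base).weq_comp _ _ ((hfib Z.base).weq_iso _ inferInstance)
      ((hfib Z.base).weq_comp _ _ (hex.map_weq ψ.base _ hφ.2) hψ.2)
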